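/- Let (V, ⋄) be a real algebra satisfying the left skew-symmetric identity (X⋄Y)⋄Z − X⋄(Y⋄Z) = −(Y⋄X)⋄Z + Y⋄(X⋄Z) for all X, Y, Z. Then the operation X•Y := X⋄Y + Y⋄X defines a Jordan algebra structure on V, i.e., • is commutative and satisfies X•((X•X)•Y) = (X•X)•(X•Y) for all X, Y. -/
import Mathlib


/-- If (V, ⋄) is a left skew-symmetric real algebra, then
X•Y := X⋄Y + Y⋄X defines a Jordan algebra structure on V. -/
theorem lssa_gives_jordan {V : Type*} [AddCommGroup V] [Module ℝ V]
    (mul : V →ₗ[ℝ] V →ₗ[ℝ] V)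
    (lssa : ∀ X Y Z : V,
      mul (mul X Y) Z - mul X (mul Y Z) = -(mul (mul Y X) Z) + mul Y (mul X Z))
    (B : V → V → V) (hB : ∀ X Y, B X Y = mul X Y + mul Y X) :
    (∀ X Y : V, B X Y = B Y X) ∧
    (∀ X Y : V, B X (B (B X X) Y) = B (B X X) (B X Y)) := by
  have mal : ∀ a b c : V, mul (a + b) c = mul a c + mul b c := by
    intro a b c; rw [map_add]; rfl
  have mar : ∀ a b c : V, mul a (b + c) = mul a b + mul a c := by
    intro a b c; rw [map_add]
  -- symmetrized identity
  have star : ∀ A C D : V, mul (mul A C) D + mul (mul C A) D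
      = mul A (mul C D) + mul C (mul A D) := by
    intro A C D
    have h := lssa A C D
    rw [sub_eq_iff_eq_add] at h
    rw [h]; abel
  -- squares act as L_X ∘ L_X
  have h2 : ∀ X Z : V, mul (mul X X) Z = mul X (mul X Z) := by
    intro X Z
    have h := lssa X X Z
    set a := mul (mul X X) Z
    set b := mul X (mul X Z)
    have h3 : a - b + (a + b) = -a + b + (a + b) := by rw [h]
    have h' : (2 : ℝ) • a = (2 : ℝ) • b := by
      rw [two_smul, two_smul]
      calc a + a = a - b + (a + b) := by abel
        _ = -a + b + (a + b) := h3
        _ = b + b := by abel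
    exact smul_right_injective V (by norm_num : (2:ℝ) ≠ 0) h'
  refine ⟨fun X Y => by rw [hB, hB]; abel, fun X Y => ?_⟩
  set p := mul X X with hp
  -- core identity with p in place of B X X
  have core : B X (B p Y) = B p (B X Y) := by
    rw [hB p Y, hB X Y, hB, hB]
    have e1 := star p Y X
    have e2 := star X Y p
    have e3 : mul X (mul p Y) = mul p (mul X Y) := by
      rw [h2, ← h2 X (mul X Y), ← hp]
    have e4 : mul Y (mul p X) = mul Y (mul X p) := by
      rw [hp, h2 X X]
    calc mul X (mul p Y + mul Y p) + mul (mul p Y + mul Y p) X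
        = mul X (mul p Y) + mul X (mul Y p)
          + (mul (mul p Y) X + mul (mul Y p) X) := by rw [mar, mal]
      _ = mul X (mul p Y) + mul X (mul Y p)
          + (mul p (mul Y X) + mul Y (mul p X)) := by rw [e1]
      _ = mul p (mul X Y) + mul X (mul Y p)
          + (mul p (mul Y X) + mul Y (mul X p)) := by rw [e3, e4]
      _ = mul p (mul X Y) + mul p (mul Y X)
          + (mul X (mul Y p) + mul Y (mul X p)) := by abel
      _ = mul p (mul X Y) + mul p (mul Y X)
          + (mul (mul X Y) p + mul (mul Y X) p) := by rw [← e2]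
      _ = mul p (mul X Y + mul Y X) + mul (mul X Y + mul Y X) p := by
          rw [mar, mal]
  have hBX : B X X = p + p := by rw [hB]
  have Badd2 : ∀ a b c : V, B a (b + c) = B a b + B a c := by
    intro a b c; rw [hB, hB, hB, mar, mal]; abel
  have Badd1 : ∀ a b c : V, B (a + b) c = B a c + B b c := by
    intro a b c; rw [hB, hB, hB, mar, mal]; abel
  rw [hBX, Badd1, Badd2, core, ← Badd1]
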